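/- For each integer m ≥ 1 set x_m = 2m² − 1 + 2m·√(m² − 1). Then there exist constants c > 0, C > 0 and t₀ ≥ 1 such that for all t ≥ t₀: c·e^{t/2} ≤ #{ m ∈ ℕ, m ≥ 1 : |log x_m − t| ≤ 1/2 } ≤ C·e^{t/2}. -/
import Mathlib

open Real

private lemma xm_lb (m : ℕ) (hm : 1 ≤ m) :
    (2 * (m : ℝ) - 1) ^ 2 ≤ 2 * (m : ℝ) ^ 2 - 1 + 2 * m * Real.sqrt ((m : ℝ) ^ 2 - 1) := by
  have h1 : (1 : ℝ) ≤ (m : ℝ) := by exact_mod_cast hm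
  have hs : (m : ℝ) - 1 ≤ Real.sqrt ((m : ℝ) ^ 2 - 1) := by
    rw [show (m : ℝ) - 1 = Real.sqrt (((m : ℝ) - 1) ^ 2) from
      (Real.sqrt_sq (by linarith)).symm]
    exact Real.sqrt_le_sqrt (by nlinarith)
  nlinarith [hs, h1]

private lemma xm_ub (m : ℕ) :
    2 * (m : ℝ) ^ 2 - 1 + 2 * m * Real.sqrt ((m : ℝ) ^ 2 - 1) ≤ (2 * (m : ℝ)) ^ 2 := by
  have h0 : (0 : ℝ) ≤ (m : ℝ) := Nat.cast_nonneg m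
  have hs : Real.sqrt ((m : ℝ) ^ 2 - 1) ≤ (m : ℝ) := by
    calc Real.sqrt ((m : ℝ) ^ 2 - 1) ≤ Real.sqrt ((m : ℝ) ^ 2) :=
          Real.sqrt_le_sqrt (by linarith)
      _ = (m : ℝ) := Real.sqrt_sq h0
  nlinarith [hs, h0]

set_option maxHeartbeats 1600000 in
theorem arithmetic_length_count :
    ∃ c C t₀ : ℝ, 0 < c ∧ 0 < C ∧ 1 ≤ t₀ ∧ ∀ t : ℝ, t₀ ≤ t →
      {m : ℕ | 1 ≤ m ∧
        |Real.log (2 * (m : ℝ) ^ 2 - 1 + 2 * m * Real.sqrt ((m : ℝ) ^ 2 - 1)) - t|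
          ≤ 1 / 2}.Finite ∧
      c * Real.exp (t / 2) ≤
        ({m : ℕ | 1 ≤ m ∧
          |Real.log (2 * (m : ℝ) ^ 2 - 1 + 2 * m * Real.sqrt ((m : ℝ) ^ 2 - 1)) - t|
            ≤ 1 / 2}.ncard : ℝ) ∧
      ({m : ℕ | 1 ≤ m ∧
          |Real.log (2 * (m : ℝ) ^ 2 - 1 + 2 * m * Real.sqrt ((m : ℝ) ^ 2 - 1)) - t|
            ≤ 1 / 2}.ncard : ℝ) ≤ C * Real.exp (t / 2) := by
  refine ⟨1/10, 3, 8, by norm_num, by norm_num, by norm_num, ?_⟩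
  intro t ht
  set S := {m : ℕ | 1 ≤ m ∧
      |Real.log (2 * (m : ℝ) ^ 2 - 1 + 2 * m * Real.sqrt ((m : ℝ) ^ 2 - 1)) - t|
        ≤ 1 / 2} with hS
  set E := Real.exp (t / 2) with hE
  set a := Real.exp (t / 2 - 1 / 4) with ha
  set b := Real.exp (t / 2 + 1 / 4) with hb
  have hEpos : 0 < E := Real.exp_pos _
  have hapos : 0 < a := Real.exp_pos _
  have hbpos : 0 < b := Real.exp_pos _
  have ha2 : a ^ 2 = Real.exp (t - 1/2) := by
    rw [ha, sq, ← Real.exp_add]; ring_nf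
  have hb2 : b ^ 2 = Real.exp (t + 1/2) := by
    rw [hb, sq, ← Real.exp_add]; ring_nf
  -- exp 1 bounds
  have he1 : (2.7182818283 : ℝ) < Real.exp 1 := Real.exp_one_gt_d9
  have he1' : Real.exp 1 < 2.7182818286 := Real.exp_one_lt_d9
  -- E ≥ exp 4 ≥ 53
  have hE53 : (53 : ℝ) ≤ E := by
    have h4 : Real.exp 4 = Real.exp 1 ^ 4 := by
      rw [← Real.exp_nat_mul]; norm_num
    have h27 : (2.7 : ℝ) ≤ Real.exp 1 := by linarith
    have hp : (2.7 : ℝ) ^ 4 ≤ Real.exp 1 ^ 4 := pow_le_pow_left₀ (by norm_num) h27 4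
    have h2 : Real.exp 4 ≤ E := by
      rw [hE]; exact Real.exp_le_exp.mpr (by linarith)
    norm_num at hp
    linarith
  -- b ≤ 3 E
  have hbE : b ≤ 3 * E := by
    have : b = E * Real.exp (1/4) := by rw [hb, hE, ← Real.exp_add]; try ring_nf
    have h14 : Real.exp (1/4) ≤ Real.exp 1 := Real.exp_le_exp.mpr (by norm_num)
    nlinarith [hEpos]
  -- b - a ≥ (9/20) E
  have hba : (9/20) * E ≤ b - a := by
    have hbe : b = E * Real.exp (1/4) := by
      rw [hb, hE, ← Real.exp_add]; try ring_nf
    have hae : a = E * Real.exp (-(1/4)) := by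
      rw [ha, hE, ← Real.exp_add]; try ring_nf
    have h1 : (5/4 : ℝ) ≤ Real.exp (1/4) := by
      have := Real.add_one_le_exp (1/4 : ℝ); linarith
    have h2 : Real.exp (-(1/4)) ≤ 4/5 := by
      rw [Real.exp_neg]
      rw [inv_le_comm₀ (Real.exp_pos _) (by norm_num)]
      linarith
    rw [hbe, hae]
    nlinarith [hEpos]
  -- positivity and log bounds for elements
  have hxpos : ∀ m : ℕ, 1 ≤ m →
      (1:ℝ) ≤ 2 * (m : ℝ) ^ 2 - 1 + 2 * m * Real.sqrt ((m : ℝ) ^ 2 - 1) := by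
    intro m hm
    have h1 : (1 : ℝ) ≤ (m : ℝ) := by exact_mod_cast hm
    have := xm_lb m hm
    nlinarith
  -- Upper containment: S ⊆ Icc 1 ⌊b⌋₊
  have hsub : S ⊆ ↑(Finset.Icc 1 ⌊b⌋₊) := by
    intro m hm
    obtain ⟨hm1, hm2⟩ := hm
    have h1 : (1 : ℝ) ≤ (m : ℝ) := by exact_mod_cast hm1
    have hx1 := hxpos m hm1
    have hlog : Real.log (2 * (m : ℝ) ^ 2 - 1 + 2 * m * Real.sqrt ((m : ℝ) ^ 2 - 1))
        ≤ t + 1/2 := by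
      have := abs_le.mp hm2; linarith [this.2]
    have hxle : 2 * (m : ℝ) ^ 2 - 1 + 2 * m * Real.sqrt ((m : ℝ) ^ 2 - 1)
        ≤ Real.exp (t + 1/2) := by
      calc 2 * (m : ℝ) ^ 2 - 1 + 2 * m * Real.sqrt ((m : ℝ) ^ 2 - 1)
          = Real.exp (Real.log (2 * (m : ℝ) ^ 2 - 1 + 2 * m * Real.sqrt ((m : ℝ) ^ 2 - 1))) :=
            (Real.exp_log (by linarith)).symm
        _ ≤ Real.exp (t + 1/2) := Real.exp_le_exp.mpr hlog
    have hm2b : (m : ℝ) ^ 2 ≤ b ^ 2 := by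
      have hlb := xm_lb m hm1
      have hq : (m : ℝ) ^ 2 ≤ (2 * (m : ℝ) - 1) ^ 2 := by nlinarith
      rw [hb2]
      linarith
    have hmb : (m : ℝ) ≤ b := by
      nlinarith [hbpos, Nat.cast_nonneg (α := ℝ) m]
    simp only [Finset.coe_Icc, Set.mem_Icc]
    exact ⟨hm1, Nat.le_floor hmb⟩
  have hfin : S.Finite := Set.Finite.subset (Finset.Icc 1 ⌊b⌋₊).finite_toSet hsub
  refine ⟨hfin, ?_, ?_⟩
  · -- lower bound
    set M₁ := ⌈(a + 1) / 2⌉₊ with hM₁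
    set M₂ := ⌊b / 2⌋₊ with hM₂
    have hM₁r : (M₁ : ℝ) < (a + 1) / 2 + 1 := Nat.ceil_lt_add_one (by positivity)
    have hM₂r : b / 2 - 1 < (M₂ : ℝ) := by
      have := Nat.lt_floor_add_one (b / 2); linarith
    have hM₂r' : (M₂ : ℝ) ≤ b / 2 := Nat.floor_le (by positivity)
    have hM₁r' : (a + 1) / 2 ≤ (M₁ : ℝ) := Nat.le_ceil _
    have hM1le : M₁ ≤ M₂ + 1 := by
      have : (M₁ : ℝ) ≤ (M₂ : ℝ) + 1 := by linarith [hba, hE53]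
      exact_mod_cast this
    have hsub2 : ↑(Finset.Icc M₁ M₂) ⊆ S := by
      intro m hm
      simp only [Finset.coe_Icc, Set.mem_Icc] at hm
      obtain ⟨hml, hmr⟩ := hm
      have hm1 : 1 ≤ m := le_trans (Nat.one_le_ceil_iff.mpr (by positivity)) hml
      have h1 : (1 : ℝ) ≤ (m : ℝ) := by exact_mod_cast hm1
      have hmlr : (a + 1) / 2 ≤ (m : ℝ) := le_trans hM₁r' (by exact_mod_cast hml)
      have hmrr : (m : ℝ) ≤ b / 2 := le_trans (by exact_mod_cast hmr) hM₂r'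
      have hxlb : a ^ 2 ≤ 2 * (m : ℝ) ^ 2 - 1 + 2 * m * Real.sqrt ((m : ℝ) ^ 2 - 1) := by
        have h0 := xm_lb m hm1
        have h2 : a ≤ 2 * (m : ℝ) - 1 := by linarith
        have h3 : a ^ 2 ≤ (2 * (m : ℝ) - 1) ^ 2 := pow_le_pow_left₀ hapos.le h2 2
        linarith
      have hxub : 2 * (m : ℝ) ^ 2 - 1 + 2 * m * Real.sqrt ((m : ℝ) ^ 2 - 1) ≤ b ^ 2 := by
        have h0 := xm_ub m
        have h2 : 2 * (m : ℝ) ≤ b := by linarith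
        have h3 : (2 * (m : ℝ)) ^ 2 ≤ b ^ 2 :=
          pow_le_pow_left₀ (by positivity) h2 2
        linarith
      have hx1 := hxpos m hm1
      constructor
      · exact hm1
      · rw [abs_le]
        constructor
        · have : Real.log (Real.exp (t - 1/2)) ≤
              Real.log (2 * (m : ℝ) ^ 2 - 1 + 2 * m * Real.sqrt ((m : ℝ) ^ 2 - 1)) := by
            apply Real.log_le_log (Real.exp_pos _)
            rw [← ha2]; exact hxlb
          rw [Real.log_exp] at this; linarith
        · have : Real.log (2 * (m : ℝ) ^ 2 - 1 + 2 * m * Real.sqrt ((m : ℝ) ^ 2 - 1)) ≤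
              Real.log (Real.exp (t + 1/2)) := by
            apply Real.log_le_log (by linarith)
            rw [← hb2]; exact hxub
          rw [Real.log_exp] at this; linarith
    have hcard : (Finset.Icc M₁ M₂).card = M₂ + 1 - M₁ := Nat.card_Icc M₁ M₂
    have hcardr : ((M₂ : ℝ) + 1 - M₁) ≤ ((Finset.Icc M₁ M₂).card : ℝ) := by
      rw [hcard]
      push_cast [Nat.cast_sub hM1le]
      push_cast
      linarith
    have hle : ((Finset.Icc M₁ M₂).card : ℝ) ≤ (S.ncard : ℝ) := by
      have := Set.ncard_le_ncard hsub2 hfin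
      rw [Set.ncard_coe_finset] at this
      exact_mod_cast this
    have hfinal : (9/40) * E - 3/2 ≤ (M₂ : ℝ) + 1 - M₁ := by linarith
    linarith [hE53, hle, hcardr, hfinal]
  · -- upper bound
    have hle : (S.ncard : ℝ) ≤ ((Finset.Icc 1 ⌊b⌋₊).card : ℝ) := by
      have := Set.ncard_le_ncard hsub (Finset.Icc 1 ⌊b⌋₊).finite_toSet
      rw [Set.ncard_coe_finset] at this
      exact_mod_cast this
    have hcard : ((Finset.Icc 1 ⌊b⌋₊).card : ℝ) ≤ b := by
      rw [Nat.card_Icc]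
      have h1 : (⌊b⌋₊ : ℝ) ≤ b := Nat.floor_le hbpos.le
      have : (⌊b⌋₊ + 1 - 1 : ℕ) = ⌊b⌋₊ := by omega
      rw [this]
      exact h1
    linarith
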